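/- Let Λ = kQ/I be a basic connected finite-dimensional algebra over an algebraically closed field given by a quiver with admissible relations, and fix a vertex t. The object L(Λe_t) of P¹(Λ), given by the map φ_t : ⊕_{α : t→s} Λe_s → Λe_t whose components are right multiplications by the arrows starting at t, is indecomposable in P¹(Λ). -/

import Mathlib

section Aux

variable {Λ : Type*} [Ring Λ] {M : Type*} [AddCommGroup M] [Module Λ M]

/-- The Jacobson radical (of `⊥`) is a two-sided ideal. -/
lemma jac_mul_mem_right {x y : Λ} (hx : x ∈ (⊥ : Ideal Λ).jacobson) :
    x * y ∈ (⊥ : Ideal Λ).jacobson :=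
  Ideal.mul_mem_right y _ hx

/-- Elements of `J • span {x}` have the form `c • x` with `c ∈ J`. -/
lemma mem_jac_smul_span_singleton {x y : M}
    (hy : y ∈ (⊥ : Ideal Λ).jacobson • (Submodule.span Λ {x})) :
    ∃ c ∈ (⊥ : Ideal Λ).jacobson, y = c • x := by
  refine Submodule.smul_induction_on hy ?_ ?_
  · intro r hr n hn
    obtain ⟨b, rfl⟩ := Submodule.mem_span_singleton.mp hn
    exact ⟨r * b, jac_mul_mem_right hr, (mul_smul r b x).symm⟩
  · rintro a b ⟨c, hc, rfl⟩ ⟨d, hd, rfl⟩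
    exact ⟨c + d, add_mem hc hd, (add_smul c d x).symm⟩

/-- Noncommutative Nakayama, finset-span form. -/
lemma nakayama_span (s : Finset M)
    (h : Submodule.span Λ (s : Set M) ≤
      (⊥ : Ideal Λ).jacobson • Submodule.span Λ (s : Set M)) :
    Submodule.span Λ (s : Set M) = ⊥ := by
  classical
  induction s using Finset.induction_on with
  | empty => simp
  | @insert x s hxs ih =>
    have hins : (↑(insert x s) : Set M) = insert x (s : Set M) := by simp
    rw [hins] at h ⊢
    have hx : x ∈ Submodule.span Λ (insert x (s : Set M)) :=
      Submodule.subset_span (Set.mem_insert x _)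
    have hx' := h hx
    rw [Submodule.span_insert, Submodule.smul_sup] at hx'
    obtain ⟨y, hy, z, hz, hxyz⟩ := Submodule.mem_sup.mp hx'
    obtain ⟨c, hc, hyc⟩ := mem_jac_smul_span_singleton hy
    -- (1 - c) • x = z, and 1 - c has a left inverse u
    obtain ⟨u, hu⟩ := Ideal.exists_mul_sub_mem_of_sub_one_mem_jacobson (1 - c)
      (by simpa using (⊥ : Ideal Λ).jacobson.neg_mem hc)
    rw [Ideal.mem_bot, sub_eq_zero] at hu
    have hxz : x ∈ (⊥ : Ideal Λ).jacobson • Submodule.span Λ (s : Set M) := by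
      have h1 : (1 - c) • x = z := by
        rw [sub_smul, one_smul, ← hyc]
        rw [← hxyz]; abel
      have : x = u • z := by
        rw [← h1, ← mul_smul, hu, one_smul]
      rw [this]
      exact Submodule.smul_mem _ u hz
    have hxs' : x ∈ Submodule.span Λ (s : Set M) :=
      Submodule.smul_le_right hxz
    rw [Submodule.span_insert_eq_span hxs'] at h ⊢
    exact ih h

/-- Noncommutative Nakayama's lemma. -/
lemma nakayama {N : Submodule Λ M} (hN : N.FG)
    (h : N ≤ (⊥ : Ideal Λ).jacobson • N) : N = ⊥ := by
  obtain ⟨s, rfl⟩ := hN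
  exact nakayama_span s h

/-- An idempotent endomorphism with range inside `rad • ⊤` is zero. -/
lemma idem_eq_zero_of_range_le [Module.Finite Λ M] {e : Module.End Λ M}
    (he : IsIdempotentElem e)
    (hr : LinearMap.range e ≤ (⊥ : Ideal Λ).jacobson • (⊤ : Submodule Λ M)) :
    e = 0 := by
  have hfg : (LinearMap.range e).FG := by
    rw [← Submodule.map_top]
    exact Submodule.FG.map e (Module.Finite.fg_top (R := Λ) (M := M))
  have hle : LinearMap.range e ≤ (⊥ : Ideal Λ).jacobson • LinearMap.range e := by
    have h1 : LinearMap.range e = Submodule.map e (LinearMap.range e) := by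
      conv_lhs => rw [← he]
      rw [Module.End.mul_eq_comp, LinearMap.range_comp]
    calc LinearMap.range e = Submodule.map e (LinearMap.range e) := h1
      _ ≤ Submodule.map e ((⊥ : Ideal Λ).jacobson • (⊤ : Submodule Λ M)) :=
          Submodule.map_mono hr
      _ = (⊥ : Ideal Λ).jacobson • Submodule.map e ⊤ := Submodule.map_smul'' _ _ _
      _ = (⊥ : Ideal Λ).jacobson • LinearMap.range e := by rw [Submodule.map_top]
  exact LinearMap.range_eq_bot.mp (nakayama hfg hle)

end Aux

/-- Indecomposability of `L(Λe_t)` in `P¹(Λ)` (Lemma 2.4, first part).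
`Λ = kQ/I` is a basic connected finite-dimensional algebra over an algebraically closed
field, and `φ : P₁ → P₂` plays the role of
`φ_t : ⊕_{α : t→s} Λe_s → Λe_t`, a minimal projective presentation of the simple module
`S_t`: both modules are finite-dimensional projectives, the image of `φ` is exactly
`rad(Λ)·P₂` (so that `Coker φ = P₂/rad(Λ)P₂ = S_t` is simple) and `ker φ ⊆ rad(Λ)·P₁`
(minimality).  Indecomposability of the object `(P₁, P₂, φ)` of `P¹(Λ)` is expressed, as
usual in an additive category with split idempotents, by the fact that every idempotent
endomorphism `(e₁, e₂)` of the object (a commuting square `φ ∘ e₁ = e₂ ∘ φ` with `e₁, e₂`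
idempotent) is trivial. -/
theorem stmt2 (k Λ : Type*) [Field k] [IsAlgClosed k] [Ring Λ] [Algebra k Λ]
    [FiniteDimensional k Λ]
    (P₁ P₂ : Type*) [AddCommGroup P₁] [AddCommGroup P₂]
    [Module Λ P₁] [Module Λ P₂] [Module k P₁] [Module k P₂]
    [IsScalarTower k Λ P₁] [IsScalarTower k Λ P₂]
    [FiniteDimensional k P₁] [FiniteDimensional k P₂]
    [Module.Projective Λ P₁] [Module.Projective Λ P₂]
    [Nontrivial P₂]
    (φ : P₁ →ₗ[Λ] P₂)
    (hrange : LinearMap.range φ = (⊥ : Ideal Λ).jacobson • (⊤ : Submodule Λ P₂))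
    (hker : LinearMap.ker φ ≤ (⊥ : Ideal Λ).jacobson • (⊤ : Submodule Λ P₁))
    (hsimple : IsSimpleModule Λ (P₂ ⧸ ((⊥ : Ideal Λ).jacobson • (⊤ : Submodule Λ P₂)))) :
    ∀ (e₁ : Module.End Λ P₁) (e₂ : Module.End Λ P₂),
      IsIdempotentElem e₁ → IsIdempotentElem e₂ →
      φ.comp e₁ = e₂.comp φ →
      (e₁ = 0 ∧ e₂ = 0) ∨ (e₁ = 1 ∧ e₂ = 1) := by
  intro e₁ e₂ he₁ he₂ hcomm
  have fin1 : Module.Finite Λ P₁ := Module.Finite.of_restrictScalars_finite k Λ P₁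
  have fin2 : Module.Finite Λ P₂ := Module.Finite.of_restrictScalars_finite k Λ P₂
  set J : Ideal Λ := (⊥ : Ideal Λ).jacobson with hJ
  set rad₂ : Submodule Λ P₂ := J • (⊤ : Submodule Λ P₂) with hrad₂
  -- the image of `range e₂ ⊔ rad₂` in the simple quotient is ⊥ or ⊤
  have key : LinearMap.range e₂ ≤ rad₂ ∨ LinearMap.range (1 - e₂) ≤ rad₂ := by
    have hmap : Submodule.map rad₂.mkQ (LinearMap.range e₂ ⊔ rad₂) = ⊥ ∨
        Submodule.map rad₂.mkQ (LinearMap.range e₂ ⊔ rad₂) = ⊤ := by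
      haveI := hsimple
      exact eq_bot_or_eq_top _
    rcases hmap with hbot | htop
    · left
      have := Submodule.map_le_iff_le_comap.mp hbot.le
      intro y hy
      have h2 := this (le_sup_left (b := rad₂) hy)
      simpa [Submodule.ker_mkQ] using h2
    · right
      have hsup : LinearMap.range e₂ ⊔ rad₂ = ⊤ := by
        have h2 := Submodule.comap_map_mkQ rad₂ (LinearMap.range e₂ ⊔ rad₂)
        rw [htop, Submodule.comap_top] at h2
        rw [h2, sup_comm rad₂ (LinearMap.range e₂ ⊔ rad₂), sup_assoc, sup_idem]
      rintro _ ⟨x, rfl⟩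
      have hx : x ∈ LinearMap.range e₂ ⊔ rad₂ := hsup ▸ Submodule.mem_top
      obtain ⟨y, ⟨w, rfl⟩, z, hz, rfl⟩ := Submodule.mem_sup.mp hx
      have hez : e₂ z ∈ rad₂ := by
        have : Submodule.map e₂ rad₂ ≤ rad₂ := by
          rw [hrad₂, Submodule.map_smul'', Submodule.map_top]
          exact smul_mono_right _ le_top
        exact this ⟨z, hz, rfl⟩
      have : (1 - e₂) (e₂ w + z) = z - e₂ z := by
        have hee : e₂ (e₂ w) = e₂ w := by
          have := DFunLike.congr_fun he₂ w
          simpa [Module.End.mul_apply] using this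
        simp only [LinearMap.sub_apply, Module.End.one_apply, map_add, hee]
        abel
      rw [this]
      exact sub_mem hz hez
  rcases key with h0 | h1
  · -- e₂ = 0, then e₁ = 0
    left
    have he₂0 : e₂ = 0 := idem_eq_zero_of_range_le he₂ h0
    have hφe₁ : φ.comp e₁ = 0 := by rw [hcomm, he₂0]; ext x; simp
    have hre₁ : LinearMap.range e₁ ≤ J • (⊤ : Submodule Λ P₁) := by
      rintro _ ⟨x, rfl⟩
      apply hker
      rw [LinearMap.mem_ker]
      have := congrArg (fun f => f x) hφe₁
      simpa using this
    exact ⟨idem_eq_zero_of_range_le he₁ hre₁, he₂0⟩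
  · -- e₂ = 1, then e₁ = 1
    right
    have he₂' : IsIdempotentElem (1 - e₂) := he₂.one_sub
    have he₂1 : (1 : Module.End Λ P₂) - e₂ = 0 := idem_eq_zero_of_range_le he₂' h1
    have he₂eq : e₂ = 1 := by
      have := sub_eq_zero.mp he₂1
      exact this.symm
    have he₁' : IsIdempotentElem (1 - e₁) := he₁.one_sub
    have hφe₁ : φ.comp (1 - e₁) = 0 := by
      have : φ.comp (1 - e₁) = φ - φ.comp e₁ := by
        ext x; simp [LinearMap.sub_apply]
      rw [this, hcomm, he₂eq]
      ext x; simp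
    have hre₁ : LinearMap.range (1 - e₁) ≤ J • (⊤ : Submodule Λ P₁) := by
      rintro _ ⟨x, rfl⟩
      apply hker
      rw [LinearMap.mem_ker]
      have := congrArg (fun f => f x) hφe₁
      simpa using this
    have : (1 : Module.End Λ P₁) - e₁ = 0 := idem_eq_zero_of_range_le he₁' hre₁
    exact ⟨(sub_eq_zero.mp this).symm, he₂eq⟩
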